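/- Let d ≥ 1, let f : ℝ^d → ℝ be L-smooth and satisfy the local PL condition with constants δ_f, μ > 0, let g satisfy the noise model with constant σ∞ > 0, and consider the noisy GD iterates with deterministic initial point θ_1 satisfying f(θ_1) < δ_f, learning rate 0 < a < min{1/L, μ ε/(L σ∞² d)}, where 0 < ε < δ_f. Define the stopping time τ = inf{ k ≥ 1 : f(θ_k) ≤ ε } and, for an integer N ≥ 1, let p_fail = P(τ > N). Then p_fail ≤ (1 − μ a p_fail / 2)^{N−1} · f(θ_1)/ε + f(θ_1)/δ_f. -/

import Mathlib

open MeasureTheory ProbabilityTheory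

local notation "⟪" x ", " y "⟫" => @inner ℝ _ _ x y



/-- Descent lemma for L-smooth functions. -/
theorem descent_lemma {d : ℕ} (f : EuclideanSpace ℝ (Fin d) → ℝ) (hf : Differentiable ℝ f)
    (L : ℝ) (hL : 0 < L)
    (hsmooth : ∀ x y : EuclideanSpace ℝ (Fin d), ‖gradient f x - gradient f y‖ ≤ L * ‖x - y‖)
    (x y : EuclideanSpace ℝ (Fin d)) :
    f y ≤ f x + ⟪gradient f x, y - x⟫ + L / 2 * ‖y - x‖ ^ 2 := by
  -- gradient is Lipschitz, hence continuous
  have hgradcont : Continuous (gradient f) := by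
    have : LipschitzWith (Real.toNNReal L) (gradient f) := by
      refine LipschitzWith.of_dist_le_mul fun p q => ?_
      rw [dist_eq_norm, dist_eq_norm]
      simpa [Real.coe_toNNReal L hL.le] using hsmooth p q
    exact this.continuous
  set v := y - x with hv
  set φ : ℝ → ℝ := fun t => f (x + t • v) with hφ
  have hd : ∀ t : ℝ, HasDerivAt φ ⟪gradient f (x + t • v), v⟫ t := by
    intro t
    have h1 : HasFDerivAt f (InnerProductSpace.toDual ℝ _ (gradient f (x + t • v))) (x + t • v) :=
      (hf (x + t • v)).hasGradientAt
    have h2 : HasDerivAt (fun t : ℝ => x + t • v) v t := by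
      simpa using ((hasDerivAt_id t).smul_const v).const_add x
    exact (h1.comp_hasDerivAt t h2)
  have hcont : Continuous fun t : ℝ => ⟪gradient f (x + t • v), v⟫ := by
    exact (hgradcont.comp (continuous_const.add (continuous_id.smul continuous_const))).inner continuous_const
  have hFTC : ∫ t in (0:ℝ)..1, ⟪gradient f (x + t • v), v⟫ = φ 1 - φ 0 := by
    refine intervalIntegral.integral_eq_sub_of_hasDerivAt (fun t _ => hd t) ?_
    exact (hcont.intervalIntegrable 0 1)
  have hbound : ∀ t ∈ Set.Icc (0:ℝ) 1,
      ⟪gradient f (x + t • v), v⟫ ≤ ⟪gradient f x, v⟫ + L * t * ‖v‖ ^ 2 := by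
    intro t ht
    have h1 : ⟪gradient f (x + t • v), v⟫ - ⟪gradient f x, v⟫
        = ⟪gradient f (x + t • v) - gradient f x, v⟫ := by
      rw [inner_sub_left]
    have h2 : ⟪gradient f (x + t • v) - gradient f x, v⟫ ≤ L * t * ‖v‖ ^ 2 := by
      calc ⟪gradient f (x + t • v) - gradient f x, v⟫
          ≤ ‖gradient f (x + t • v) - gradient f x‖ * ‖v‖ := real_inner_le_norm _ _
        _ ≤ (L * ‖(x + t • v) - x‖) * ‖v‖ := by
            have := hsmooth (x + t • v) x
            nlinarith [norm_nonneg v]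
        _ = L * t * ‖v‖ ^ 2 := by
            have : ‖(x + t • v) - x‖ = t * ‖v‖ := by
              simp [norm_smul, abs_of_nonneg ht.1]
            rw [this]; ring
    linarith
  have hint : ∫ t in (0:ℝ)..1, ⟪gradient f (x + t • v), v⟫
      ≤ ∫ t in (0:ℝ)..1, (⟪gradient f x, v⟫ + L * t * ‖v‖ ^ 2) := by
    have hc2 : Continuous fun t : ℝ => ⟪gradient f x, v⟫ + L * t * ‖v‖ ^ 2 :=
      continuous_const.add ((continuous_const.mul continuous_id).mul continuous_const)
    exact intervalIntegral.integral_mono_on (by norm_num) (hcont.intervalIntegrable 0 1)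
      (hc2.intervalIntegrable 0 1) hbound
  have heval : ∫ t in (0:ℝ)..1, (⟪gradient f x, v⟫ + L * t * ‖v‖ ^ 2)
      = ⟪gradient f x, v⟫ + L / 2 * ‖v‖ ^ 2 := by
    have hc3 : Continuous fun t : ℝ => L * t * ‖v‖ ^ 2 :=
      (continuous_const.mul continuous_id).mul continuous_const
    rw [intervalIntegral.integral_add (intervalIntegrable_const) (hc3.intervalIntegrable 0 1)]
    have : ∀ t : ℝ, L * t * ‖v‖ ^ 2 = (L * ‖v‖ ^ 2) * t := fun t => by ring
    simp only [this]
    rw [intervalIntegral.integral_const_mul, integral_id]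
    simp
    ring
  have h0 : φ 0 = f x := by simp [hφ]
  have h1 : φ 1 = f y := by simp [hφ, hv]
  nlinarith [hFTC, hint, heval]



theorem onestep {d : ℕ} (f : EuclideanSpace ℝ (Fin d) → ℝ) (hf : Differentiable ℝ f)
    (L : ℝ) (hL : 0 < L)
    (hdescent : ∀ x y : EuclideanSpace ℝ (Fin d),
      f y ≤ f x + ⟪gradient f x, y - x⟫ + L / 2 * ‖y - x‖ ^ 2)
    (hfnonneg : ∀ x, 0 ≤ f x)
    (δf μ : ℝ) (hδf : 0 < δf) (hμ : 0 < μ)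
    (hPL : ∀ x, f x < δf → 2 * μ * f x ≤ ‖gradient f x‖ ^ 2)
    {Ω : Type*} [MeasurableSpace Ω] (P : Measure Ω) [IsProbabilityMeasure P]
    (g : EuclideanSpace ℝ (Fin d) → Ω → EuclideanSpace ℝ (Fin d))
    (hgmeas : Measurable (Function.uncurry g))
    (σ : ℝ) (hσ : 0 < σ)
    (hgint : ∀ x, Integrable (g x) P)
    (hunbiased : ∀ x, ∫ ω, g x ω ∂P = gradient f x)
    (hvarint : ∀ x i, Integrable (fun ω => |g x ω i - gradient f x i| ^ 2) P)
    (hvar : ∀ x i, ∫ ω, |g x ω i - gradient f x i| ^ 2 ∂P ≤ σ ^ 2)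
    (ε : ℝ) (hε0 : 0 < ε)
    (a : ℝ) (ha0 : 0 < a) (haL : a * L ≤ 1) (haσ : a * (L * σ ^ 2 * d) ≤ μ * ε)
    (x : EuclideanSpace ℝ (Fin d)) :
    Integrable (fun ω => f (x - a • g x ω)) P ∧
      (ε ≤ f x → f x < δf → ∫ ω, f (x - a • g x ω) ∂P ≤ (1 - μ * a / 2) * f x) := by
  have hGmeas : Measurable (g x) := hgmeas.comp measurable_prodMk_left
  -- squared norm of the deviation
  have hnormsq : ∀ ω, ‖g x ω - gradient f x‖ ^ 2
      = ∑ i, |g x ω i - gradient f x i| ^ 2 := by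
    intro ω
    rw [EuclideanSpace.norm_eq, Real.sq_sqrt (by positivity)]
    refine Finset.sum_congr rfl fun i _ => ?_
    simp [Real.norm_eq_abs]
  have hdev_int : Integrable (fun ω => ‖g x ω - gradient f x‖ ^ 2) P := by
    have : Integrable (fun ω => ∑ i, |g x ω i - gradient f x i| ^ 2) P :=
      integrable_finset_sum _ fun i _ => hvarint x i
    exact this.congr (Filter.Eventually.of_forall fun ω => (hnormsq ω).symm)
  have hdev_le : ∫ ω, ‖g x ω - gradient f x‖ ^ 2 ∂P ≤ d * σ ^ 2 := by
    calc ∫ ω, ‖g x ω - gradient f x‖ ^ 2 ∂P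
        = ∑ i, ∫ ω, |g x ω i - gradient f x i| ^ 2 ∂P := by
          rw [← integral_finset_sum _ fun i _ => hvarint x i]
          exact integral_congr_ae (Filter.Eventually.of_forall fun ω => hnormsq ω)
      _ ≤ ∑ _i : Fin d, σ ^ 2 := Finset.sum_le_sum fun i _ => hvar x i
      _ = d * σ ^ 2 := by simp [mul_comm]
  have hinner_int : Integrable (fun ω => ⟪gradient f x, g x ω⟫) P :=
    (hgint x).const_inner _
  have hinner_eq : ∫ ω, ⟪gradient f x, g x ω⟫ ∂P = ‖gradient f x‖ ^ 2 := by
    rw [integral_inner (hgint x), hunbiased x, real_inner_self_eq_norm_sq]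
  -- pointwise expansion of ‖g‖²
  have hexp : ∀ ω, ‖g x ω‖ ^ 2
      = ‖g x ω - gradient f x‖ ^ 2 + 2 * ⟪gradient f x, g x ω⟫ - ‖gradient f x‖ ^ 2 := by
    intro ω
    have := norm_sub_sq_real (g x ω) (gradient f x)
    have h2 : ⟪g x ω, gradient f x⟫ = ⟪gradient f x, g x ω⟫ := real_inner_comm _ _
    linarith
  have hi1 : Integrable (fun ω => ‖g x ω - gradient f x‖ ^ 2
      + 2 * ⟪gradient f x, g x ω⟫) P := hdev_int.add (hinner_int.const_mul 2)
  have hi2 : Integrable (fun ω => ‖g x ω - gradient f x‖ ^ 2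
      + 2 * ⟪gradient f x, g x ω⟫ - ‖gradient f x‖ ^ 2) P := hi1.sub (integrable_const _)
  have hsq_int : Integrable (fun ω => ‖g x ω‖ ^ 2) P :=
    hi2.congr (Filter.Eventually.of_forall fun ω => (hexp ω).symm)
  have hsq_le : ∫ ω, ‖g x ω‖ ^ 2 ∂P ≤ d * σ ^ 2 + ‖gradient f x‖ ^ 2 := by
    have heq : ∫ ω, ‖g x ω‖ ^ 2 ∂P = ∫ ω, (‖g x ω - gradient f x‖ ^ 2
        + 2 * ⟪gradient f x, g x ω⟫ - ‖gradient f x‖ ^ 2) ∂P :=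
      integral_congr_ae (Filter.Eventually.of_forall hexp)
    rw [heq, integral_sub hi1 (integrable_const _),
      integral_add hdev_int (hinner_int.const_mul 2), integral_const_mul, hinner_eq,
      integral_const]
    simp only [measure_univ, ENNReal.toReal_one, probReal_univ, smul_eq_mul, one_mul]
    linarith
  -- the upper bound function
  set B : Ω → ℝ := fun ω => f x - a * ⟪gradient f x, g x ω⟫ + L * a ^ 2 / 2 * ‖g x ω‖ ^ 2
    with hB
  have hB1 : Integrable (fun ω => f x - a * ⟪gradient f x, g x ω⟫) P :=
    (integrable_const _).sub (hinner_int.const_mul a)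
  have hBint : Integrable B P := hB1.add (hsq_int.const_mul _)
  have hfB : ∀ ω, f (x - a • g x ω) ≤ B ω := by
    intro ω
    have := hdescent x (x - a • g x ω)
    have h1 : (x - a • g x ω) - x = (-a) • g x ω := by rw [neg_smul]; abel
    rw [h1] at this
    have h2 : ⟪gradient f x, (-a) • g x ω⟫ = -a * ⟪gradient f x, g x ω⟫ := by
      rw [real_inner_smul_right]
    have h3 : ‖(-a) • g x ω‖ ^ 2 = a ^ 2 * ‖g x ω‖ ^ 2 := by
      rw [norm_smul]; simp [abs_of_pos ha0, mul_pow]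
    rw [h2, h3] at this
    simp only [hB]; nlinarith
  have hmeasf : AEStronglyMeasurable (fun ω => f (x - a • g x ω)) P := by
    have : Measurable fun ω => x - a • g x ω := measurable_const.sub (hGmeas.const_smul a)
    exact (hf.continuous.measurable.comp this).aestronglyMeasurable
  have hfint : Integrable (fun ω => f (x - a • g x ω)) P := by
    refine hBint.mono' hmeasf (Filter.Eventually.of_forall fun ω => ?_)
    rw [Real.norm_eq_abs, abs_of_nonneg (hfnonneg _)]
    exact hfB ω
  refine ⟨hfint, fun hεx hxδ => ?_⟩
  have hIB : ∫ ω, f (x - a • g x ω) ∂P ≤ ∫ ω, B ω ∂P :=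
    integral_mono hfint hBint hfB
  have hIBeq : ∫ ω, B ω ∂P = f x - a * ‖gradient f x‖ ^ 2
      + L * a ^ 2 / 2 * ∫ ω, ‖g x ω‖ ^ 2 ∂P := by
    simp only [hB]
    rw [integral_add hB1 (hsq_int.const_mul _),
      integral_sub (integrable_const _) (hinner_int.const_mul a),
      integral_const_mul, integral_const_mul, hinner_eq, integral_const]
    simp
  have hgr : 2 * μ * f x ≤ ‖gradient f x‖ ^ 2 := hPL x hxδ
  have hLa2 : L * a ^ 2 / 2 * (d * σ ^ 2) ≤ a * (μ * ε) / 2 := by nlinarith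
  calc ∫ ω, f (x - a • g x ω) ∂P ≤ f x - a * ‖gradient f x‖ ^ 2
      + L * a ^ 2 / 2 * ∫ ω, ‖g x ω‖ ^ 2 ∂P := by rw [← hIBeq]; exact hIB
    _ ≤ f x - a * ‖gradient f x‖ ^ 2
      + L * a ^ 2 / 2 * (d * σ ^ 2 + ‖gradient f x‖ ^ 2) := by
        have hc : (0:ℝ) ≤ L * a ^ 2 / 2 := by positivity
        nlinarith [mul_le_mul_of_nonneg_left hsq_le hc]
    _ ≤ (1 - μ * a / 2) * f x := by
        nlinarith [mul_le_mul_of_nonneg_left hgr ha0.le,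
          mul_nonneg (mul_nonneg ha0.le (sq_nonneg ‖gradient f x‖))
            (by linarith : (0:ℝ) ≤ 1 - a * L),
          mul_le_mul_of_nonneg_left hεx (mul_nonneg ha0.le hμ.le)]



noncomputable def itM {d : ℕ} {Ω : Type*}
    (g : EuclideanSpace ℝ (Fin d) → Ω → EuclideanSpace ℝ (Fin d)) (a : ℝ)
    (θ1 : EuclideanSpace ℝ (Fin d)) (n : ℕ) :
    ℕ → (Fin n → Ω) → EuclideanSpace ℝ (Fin d)
  | 0 => fun _ => θ1
  | (k + 1) => fun u =>
      if h : 1 ≤ k ∧ k < n then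
        itM g a θ1 n k u - a • g (itM g a θ1 n k u) (u ⟨k, h.2⟩)
      else itM g a θ1 n k u

theorem itM_measurable {d : ℕ} {Ω : Type*} [MeasurableSpace Ω]
    {g : EuclideanSpace ℝ (Fin d) → Ω → EuclideanSpace ℝ (Fin d)}
    (hgmeas : Measurable (Function.uncurry g)) (a : ℝ)
    (θ1 : EuclideanSpace ℝ (Fin d)) (n : ℕ) :
    ∀ k, Measurable (itM g a θ1 n k) := by
  intro k
  induction k with
  | zero => exact measurable_const
  | succ k ih =>
    by_cases h : 1 ≤ k ∧ k < n
    · have he : itM g a θ1 n (k + 1) = fun u =>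
          itM g a θ1 n k u - a • g (itM g a θ1 n k u) (u ⟨k, h.2⟩) := by
        funext u; simp [itM, h]
      rw [he]
      exact ih.sub ((hgmeas.comp (ih.prodMk (measurable_pi_apply _))).const_smul a)
    · have he : itM g a θ1 n (k + 1) = itM g a θ1 n k := by
        funext u; simp [itM, h]
      rw [he]; exact ih

theorem itM_eq {d : ℕ} {Ω Ω' : Type*}
    {g : EuclideanSpace ℝ (Fin d) → Ω → EuclideanSpace ℝ (Fin d)} {a : ℝ}
    {θ1 : EuclideanSpace ℝ (Fin d)} {ξ : ℕ → Ω' → Ω}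
    {θ : ℕ → Ω' → EuclideanSpace ℝ (Fin d)}
    (hθinit : ∀ ω, θ 1 ω = θ1)
    (hθrec : ∀ m, 1 ≤ m → ∀ ω, θ (m + 1) ω = θ m ω - a • g (θ m ω) (ξ m ω))
    (n : ℕ) (ω' : Ω') :
    ∀ k, 1 ≤ k → k ≤ n → θ k ω' = itM g a θ1 n k (fun i : Fin n => ξ i ω') := by
  intro k
  induction k with
  | zero => intro h; exact absurd h (by norm_num)
  | succ k ih =>
    intro h1 h2
    by_cases hk : 1 ≤ k
    · have hkn : k < n := by omega
      rw [hθrec k hk ω']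
      have he : itM g a θ1 n (k + 1) (fun i : Fin n => ξ i ω')
          = itM g a θ1 n k (fun i : Fin n => ξ i ω')
            - a • g (itM g a θ1 n k (fun i : Fin n => ξ i ω')) (ξ k ω') := by
        simp [itM, hk, hkn]
      rw [he, ← ih hk (by omega)]
    · have hk0 : k = 0 := by omega
      subst hk0
      have he : itM g a θ1 n 1 (fun i : Fin n => ξ i ω') = θ1 := by
        simp [itM]
      rw [he, hθinit ω']

theorem step_main {d : ℕ} (f : EuclideanSpace ℝ (Fin d) → ℝ) (hf : Differentiable ℝ f)
    (L : ℝ) (hL : 0 < L)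
    (hdescent : ∀ x y : EuclideanSpace ℝ (Fin d),
      f y ≤ f x + ⟪gradient f x, y - x⟫ + L / 2 * ‖y - x‖ ^ 2)
    (hfnonneg : ∀ x, 0 ≤ f x)
    (δf μ : ℝ) (hδf : 0 < δf) (hμ : 0 < μ)
    (hPL : ∀ x, f x < δf → 2 * μ * f x ≤ ‖gradient f x‖ ^ 2)
    {Ω : Type*} [MeasurableSpace Ω] (P : Measure Ω) [IsProbabilityMeasure P]
    (g : EuclideanSpace ℝ (Fin d) → Ω → EuclideanSpace ℝ (Fin d))
    (hgmeas : Measurable (Function.uncurry g))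
    (σ : ℝ) (hσ : 0 < σ)
    (hgint : ∀ x, Integrable (g x) P)
    (hunbiased : ∀ x, ∫ ω, g x ω ∂P = gradient f x)
    (hvarint : ∀ x i, Integrable (fun ω => |g x ω i - gradient f x i| ^ 2) P)
    (hvar : ∀ x i, ∫ ω, |g x ω i - gradient f x i| ^ 2 ∂P ≤ σ ^ 2)
    {Ω' : Type*} [MeasurableSpace Ω'] (P' : Measure Ω') [IsProbabilityMeasure P']
    (ξ : ℕ → Ω' → Ω) (hξmeas : ∀ n, Measurable (ξ n))
    (hiid : iIndepFun ξ P')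
    (hlaw : ∀ n, P'.map (ξ n) = P)
    (θ1 : EuclideanSpace ℝ (Fin d))
    (ε : ℝ) (hε0 : 0 < ε)
    (a : ℝ) (ha0 : 0 < a) (haL : a * L ≤ 1) (haσ : a * (L * σ ^ 2 * d) ≤ μ * ε)
    (θ : ℕ → Ω' → EuclideanSpace ℝ (Fin d))
    (hθinit : ∀ ω, θ 1 ω = θ1)
    (hθrec : ∀ m, 1 ≤ m → ∀ ω, θ (m + 1) ω = θ m ω - a • g (θ m ω) (ξ m ω))
    (n : ℕ) (hn : 1 ≤ n)
    (A : Set Ω')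
    (hA : A = {ω' | ∀ m, 1 ≤ m → m ≤ n → ε < f (θ m ω') ∧ f (θ m ω') < δf}) :
    Integrable (A.indicator fun ω' => f (θ (n + 1) ω')) P' ∧
      ∫ ω', A.indicator (fun ω' => f (θ (n + 1) ω')) ω' ∂P'
        ≤ (1 - μ * a / 2) * ∫ ω', A.indicator (fun ω' => f (θ n ω')) ω' ∂P' := by
  classical
  set Θ := itM g a θ1 n with hΘ
  have hΘmeas : ∀ k, Measurable (Θ k) := itM_measurable hgmeas a θ1 n
  set R : Ω' → (Fin n → Ω) := fun ω' i => ξ i ω' with hRdef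
  have hRmeas : Measurable R := measurable_pi_lambda _ fun i => hξmeas i
  have hindep : IndepFun R (ξ n) P' := by
    have h0 := hiid.indepFun_finset (Finset.range n) {n}
      (by simp [Finset.disjoint_singleton_right]) hξmeas
    have h1 := h0.comp
      (φ := fun (u : {x // x ∈ Finset.range n} → Ω) (i : Fin n) =>
        u ⟨(i : ℕ), Finset.mem_range.2 i.2⟩)
      (ψ := fun (u : {x // x ∈ ({n} : Finset ℕ)} → Ω) => u ⟨n, Finset.mem_singleton_self n⟩)
      (measurable_pi_lambda _ fun i => measurable_pi_apply _)
      (measurable_pi_apply _ : Measurable fun (u : {x // x ∈ ({n} : Finset ℕ)} → Ω) =>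
        u ⟨n, Finset.mem_singleton_self n⟩)
    convert h1 using 1
    all_goals rfl
  have hpairmeas : Measurable fun ω' => (R ω', ξ n ω') := hRmeas.prodMk (hξmeas n)
  have hmap : P'.map (fun ω' => (R ω', ξ n ω')) = (P'.map R).prod P := by
    rw [← hlaw n]
    exact (indepFun_iff_map_prod_eq_prod_map_map hRmeas.aemeasurable
      (hξmeas n).aemeasurable).1 hindep
  haveI : IsProbabilityMeasure (P'.map R) := Measure.isProbabilityMeasure_map hRmeas.aemeasurable
  set S : Set (Fin n → Ω) :=
    {u | ∀ m, 1 ≤ m → m ≤ n → ε < f (Θ m u) ∧ f (Θ m u) < δf} with hS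
  have hfm : ∀ m, Measurable fun u => f (Θ m u) :=
    fun m => hf.continuous.measurable.comp (hΘmeas m)
  have hSmeas : MeasurableSet S := by
    have : S = ⋂ m, {u | 1 ≤ m → m ≤ n → ε < f (Θ m u) ∧ f (Θ m u) < δf} := by
      ext u; simp [hS, Set.mem_iInter]
    rw [this]
    refine MeasurableSet.iInter fun m => ?_
    by_cases hm : 1 ≤ m ∧ m ≤ n
    · have he : {u | 1 ≤ m → m ≤ n → ε < f (Θ m u) ∧ f (Θ m u) < δf}
          = {u | ε < f (Θ m u)} ∩ {u | f (Θ m u) < δf} := by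
        ext u; simp [hm.1, hm.2]
      rw [he]
      exact (measurableSet_lt measurable_const (hfm m)).inter
        (measurableSet_lt (hfm m) measurable_const)
    · have he : {u | 1 ≤ m → m ≤ n → ε < f (Θ m u) ∧ f (Θ m u) < δf} = Set.univ := by
        ext u; simp only [Set.mem_setOf_eq, Set.mem_univ, iff_true]
        intro h1 h2; exact absurd ⟨h1, h2⟩ hm
      rw [he]; exact MeasurableSet.univ
  set H : (Fin n → Ω) × Ω → ℝ := fun p =>
    S.indicator (fun _ => (1 : ℝ)) p.1 * f (Θ n p.1 - a • g (Θ n p.1) p.2) with hH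
  have hmeasinner : Measurable fun p : (Fin n → Ω) × Ω => Θ n p.1 - a • g (Θ n p.1) p.2 := by
    have h1 : Measurable fun p : (Fin n → Ω) × Ω => Θ n p.1 := (hΘmeas n).comp measurable_fst
    exact h1.sub ((hgmeas.comp (h1.prodMk measurable_snd)).const_smul a)
  have hHmeas : Measurable H :=
    ((measurable_const.indicator hSmeas).comp measurable_fst).mul
      (hf.continuous.measurable.comp hmeasinner)
  have hθm : ∀ ω' m, 1 ≤ m → m ≤ n → θ m ω' = Θ m (R ω') := fun ω' m h1 h2 =>
    itM_eq hθinit hθrec n ω' m h1 h2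
  have hmemA : ∀ ω', ω' ∈ A ↔ R ω' ∈ S := by
    intro ω'
    rw [hA, hS]
    simp only [Set.mem_setOf_eq]
    constructor
    · intro h m h1 h2
      rw [← hθm ω' m h1 h2]; exact h m h1 h2
    · intro h m h1 h2
      rw [hθm ω' m h1 h2]; exact h m h1 h2
  have hθn : ∀ ω', θ n ω' = Θ n (R ω') := fun ω' => hθm ω' n hn le_rfl
  have hpt1 : ∀ ω', A.indicator (fun ω' => f (θ (n + 1) ω')) ω' = H (R ω', ξ n ω') := by
    intro ω'
    by_cases hmem : ω' ∈ A
    · rw [Set.indicator_of_mem hmem]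
      simp only [hH]
      rw [Set.indicator_of_mem ((hmemA ω').1 hmem), one_mul, hθrec n hn ω', hθn ω']
    · rw [Set.indicator_of_notMem hmem]
      simp only [hH]
      rw [Set.indicator_of_notMem (fun hc => hmem ((hmemA ω').2 hc)), zero_mul]
  have hpt2 : ∀ ω', A.indicator (fun ω' => f (θ n ω')) ω'
      = S.indicator (fun u => f (Θ n u)) (R ω') := by
    intro ω'
    by_cases hmem : ω' ∈ A
    · rw [Set.indicator_of_mem hmem, Set.indicator_of_mem ((hmemA ω').1 hmem), hθn ω']
    · rw [Set.indicator_of_notMem hmem,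
        Set.indicator_of_notMem (fun hc => hmem ((hmemA ω').2 hc))]
  have hone := onestep f hf L hL hdescent hfnonneg δf μ hδf hμ hPL P g hgmeas σ hσ
    hgint hunbiased hvarint hvar ε hε0 a ha0 haL haσ
  have hHaesm : AEStronglyMeasurable H ((P'.map R).prod P) := hHmeas.aestronglyMeasurable
  have hindic01 : ∀ u, S.indicator (fun _ => (1:ℝ)) u = 0 ∨ S.indicator (fun _ => (1:ℝ)) u = 1 := by
    intro u
    by_cases hu : u ∈ S
    · right; rw [Set.indicator_of_mem hu]
    · left; rw [Set.indicator_of_notMem hu]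
  have hHint : Integrable H ((P'.map R).prod P) := by
    rw [integrable_prod_iff hHaesm]
    constructor
    · refine Filter.Eventually.of_forall fun u => ?_
      simp only [hH]
      exact ((hone (Θ n u)).1.const_mul _)
    · refine Integrable.mono' (integrable_const δf)
        hHaesm.norm.integral_prod_right' (Filter.Eventually.of_forall fun u => ?_)
      have hval : ∀ ω, ‖H (u, ω)‖ = H (u, ω) := by
        intro ω
        rw [Real.norm_eq_abs, abs_of_nonneg]
        exact mul_nonneg (Set.indicator_nonneg (fun _ _ => zero_le_one) _) (hfnonneg _)
      rw [Real.norm_eq_abs]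
      rw [integral_congr_ae (Filter.Eventually.of_forall hval)]
      by_cases hu : u ∈ S
      · have hband := hu n hn le_rfl
        have h1 : ∫ ω, H (u, ω) ∂P = ∫ ω, f (Θ n u - a • g (Θ n u) ω) ∂P := by
          refine integral_congr_ae (Filter.Eventually.of_forall fun ω => ?_)
          simp only [hH]
          rw [Set.indicator_of_mem hu, one_mul]
        rw [h1, abs_of_nonneg (integral_nonneg fun ω => hfnonneg _)]
        calc ∫ ω, f (Θ n u - a • g (Θ n u) ω) ∂P
            ≤ (1 - μ * a / 2) * f (Θ n u) := (hone (Θ n u)).2 hband.1.le hband.2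
          _ ≤ 1 * f (Θ n u) := by
              have : 0 ≤ μ * a / 2 := by positivity
              nlinarith [hfnonneg (Θ n u)]
          _ ≤ δf := by rw [one_mul]; exact hband.2.le
      · have h1 : ∫ ω, H (u, ω) ∂P = 0 := by
          rw [integral_eq_zero_iff_of_nonneg]
          · refine Filter.Eventually.of_forall fun ω => ?_
            simp only [hH]
            rw [Set.indicator_of_notMem hu, zero_mul]; simp
          · intro ω
            exact mul_nonneg (Set.indicator_nonneg (fun _ _ => zero_le_one) _) (hfnonneg _)
          · simp only [hH]
            exact ((hone (Θ n u)).1.const_mul _)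
        rw [h1]; simp [hδf.le]
  have hmapint : ∫ p, H p ∂((P'.map R).prod P) = ∫ ω', H (R ω', ξ n ω') ∂P' := by
    rw [← hmap]
    exact integral_map hpairmeas.aemeasurable hHmeas.aestronglyMeasurable
  have hIone : Integrable (A.indicator fun ω' => f (θ (n + 1) ω')) P' := by
    have h2 : Integrable (fun ω' => H (R ω', ξ n ω')) P' := by
      have h3 := (integrable_map_measure hHmeas.aestronglyMeasurable
        hpairmeas.aemeasurable).1 (by rwa [hmap])
      exact h3
    exact h2.congr (Filter.Eventually.of_forall fun ω' => (hpt1 ω').symm)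
  refine ⟨hIone, ?_⟩
  have hL1 : ∫ ω', A.indicator (fun ω' => f (θ (n + 1) ω')) ω' ∂P'
      = ∫ p, H p ∂((P'.map R).prod P) := by
    rw [hmapint]
    exact integral_congr_ae (Filter.Eventually.of_forall hpt1)
  rw [hL1, integral_prod _ hHint]
  set K : (Fin n → Ω) → ℝ := fun u =>
    (1 - μ * a / 2) * S.indicator (fun u => f (Θ n u)) u with hK
  have hKmeas : Measurable K := ((hfm n).indicator hSmeas).const_mul _
  have hKint : Integrable K (P'.map R) := by
    refine Integrable.mono' (integrable_const (|1 - μ * a / 2| * δf))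
      hKmeas.aestronglyMeasurable (Filter.Eventually.of_forall fun u => ?_)
    simp only [hK, Real.norm_eq_abs, abs_mul]
    refine mul_le_mul_of_nonneg_left ?_ (abs_nonneg _)
    by_cases hu : u ∈ S
    · rw [Set.indicator_of_mem hu, abs_of_nonneg (hfnonneg _)]
      exact (hu n hn le_rfl).2.le
    · rw [Set.indicator_of_notMem hu]; simp [hδf.le]
  have hptK : ∀ u, ∫ ω, H (u, ω) ∂P ≤ K u := by
    intro u
    by_cases hu : u ∈ S
    · have h1 : ∫ ω, H (u, ω) ∂P = ∫ ω, f (Θ n u - a • g (Θ n u) ω) ∂P := by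
        refine integral_congr_ae (Filter.Eventually.of_forall fun ω => ?_)
        simp only [hH]
        rw [Set.indicator_of_mem hu, one_mul]
      have hband := hu n hn le_rfl
      rw [h1]
      simp only [hK]
      rw [Set.indicator_of_mem hu]
      exact (hone (Θ n u)).2 hband.1.le hband.2
    · have h1 : ∫ ω, H (u, ω) ∂P = 0 := by
        refine integral_eq_zero_of_ae (Filter.Eventually.of_forall fun ω => ?_)
        simp only [hH]
        rw [Set.indicator_of_notMem hu, zero_mul]; simp
      rw [h1]
      simp only [hK]
      rw [Set.indicator_of_notMem hu, mul_zero]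
  have hIleft : Integrable (fun u => ∫ ω, H (u, ω) ∂P) (P'.map R) :=
    hHint.integral_prod_left
  have hmono : ∫ u, (∫ ω, H (u, ω) ∂P) ∂(P'.map R) ≤ ∫ u, K u ∂(P'.map R) :=
    integral_mono hIleft hKint hptK
  have hKval : ∫ u, K u ∂(P'.map R)
      = (1 - μ * a / 2) * ∫ ω', A.indicator (fun ω' => f (θ n ω')) ω' ∂P' := by
    simp only [hK]
    rw [integral_const_mul]
    congr 1
    rw [integral_map hRmeas.aemeasurable
      (((hfm n).indicator hSmeas).aestronglyMeasurable)]
    exact integral_congr_ae (Filter.Eventually.of_forall fun ω' => (hpt2 ω').symm)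
  calc ∫ u, (∫ ω, H (u, ω) ∂P) ∂(P'.map R) ≤ ∫ u, K u ∂(P'.map R) := hmono
    _ = _ := hKval

set_option maxHeartbeats 1000000 in
/-- bound on the failure probability of noisy gradient descent.
Under `L`-smoothness, the local PL condition with constants `δf, μ > 0` (minimum value
normalized to `0`), the unbiased noise model with constant `σ > 0`, and noisy GD iterates
with `f(θ₁) < δf`, learning rate `0 < a < min{1/L, με/(Lσ²d)}` for a precision
`0 < ε < δf`: with the stopping time `τ = inf{k ≥ 1 : f(θ_k) ≤ ε}` and
`p_fail = P(τ > N)`, one has `p_fail ≤ (1 - μ a p_fail/2)^(N-1) f(θ₁)/ε + f(θ₁)/δf`. -/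
theorem stmt14
    (d : ℕ) (hd : 1 ≤ d)
    (f : EuclideanSpace ℝ (Fin d) → ℝ) (hf : Differentiable ℝ f)
    (L : ℝ) (hL : 0 < L)
    (hsmooth : ∀ x y : EuclideanSpace ℝ (Fin d),
      ‖gradient f x - gradient f y‖ ≤ L * ‖x - y‖)
    (hfnonneg : ∀ x, 0 ≤ f x) (hfmin : ∃ x, f x = 0)
    (δf μ : ℝ) (hδf : 0 < δf) (hμ : 0 < μ)
    (hPL : ∀ x, f x < δf → 2 * μ * f x ≤ ‖gradient f x‖ ^ 2)
    (Ω : Type*) [MeasurableSpace Ω] (P : Measure Ω) [IsProbabilityMeasure P]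
    (g : EuclideanSpace ℝ (Fin d) → Ω → EuclideanSpace ℝ (Fin d))
    (hgmeas : Measurable (Function.uncurry g))
    (σ : ℝ) (hσ : 0 < σ)
    (hgint : ∀ x, Integrable (g x) P)
    (hunbiased : ∀ x, ∫ ω, g x ω ∂P = gradient f x)
    (hvarint : ∀ x i, Integrable (fun ω => |g x ω i - gradient f x i| ^ 2) P)
    (hvar : ∀ x i, ∫ ω, |g x ω i - gradient f x i| ^ 2 ∂P ≤ σ ^ 2)
    (Ω' : Type*) [MeasurableSpace Ω'] (P' : Measure Ω') [IsProbabilityMeasure P']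
    (ξ : ℕ → Ω' → Ω) (hξmeas : ∀ n, Measurable (ξ n))
    (hiid : iIndepFun ξ P')
    (hlaw : ∀ n, P'.map (ξ n) = P)
    (θ1 : EuclideanSpace ℝ (Fin d)) (hθ1 : f θ1 < δf)
    (ε : ℝ) (hε0 : 0 < ε) (hεδ : ε < δf)
    (a : ℝ) (ha0 : 0 < a)
    (ha : a < min (1 / L) (μ * ε / (L * σ ^ 2 * d)))
    (θ : ℕ → Ω' → EuclideanSpace ℝ (Fin d))
    (hθinit : ∀ ω, θ 1 ω = θ1)
    (hθrec : ∀ n, 1 ≤ n → ∀ ω, θ (n + 1) ω = θ n ω - a • g (θ n ω) (ξ n ω))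
    (τ : Ω' → ℕ∞)
    (hτ : ∀ ω, τ ω = sInf {k : ℕ∞ | ∃ m : ℕ, k = m ∧ 1 ≤ m ∧ f (θ m ω) ≤ ε})
    (N : ℕ) (hN : 1 ≤ N)
    (pfail : ℝ) (hpfail : pfail = (P' {ω | (N : ℕ∞) < τ ω}).toReal) :
    pfail ≤ (1 - μ * a * pfail / 2) ^ (N - 1) * (f θ1 / ε) + f θ1 / δf := by
  classical
  by_cases hcase : f θ1 ≤ ε
  · -- trivial case: τ = 1 everywhere
    have hp0 : pfail = 0 := by
      have hempty : {ω | (N : ℕ∞) < τ ω} = ∅ := by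
        ext ω
        simp only [Set.mem_setOf_eq, Set.mem_empty_iff_false, iff_false, not_lt]
        rw [hτ ω]
        have h1 : ((1 : ℕ) : ℕ∞) ∈ {k : ℕ∞ | ∃ m : ℕ, k = m ∧ 1 ≤ m ∧ f (θ m ω) ≤ ε} :=
          ⟨1, rfl, le_rfl, by rwa [hθinit ω]⟩
        calc sInf {k : ℕ∞ | ∃ m : ℕ, k = m ∧ 1 ≤ m ∧ f (θ m ω) ≤ ε}
            ≤ ((1 : ℕ) : ℕ∞) := sInf_le h1
          _ ≤ (N : ℕ∞) := by exact_mod_cast hN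
      rw [hpfail, hempty]; simp
    rw [hp0]
    simp only [mul_zero, zero_div, sub_zero, one_pow, one_mul]
    have h1 : 0 ≤ f θ1 / ε := div_nonneg (hfnonneg θ1) hε0.le
    have h2 : 0 ≤ f θ1 / δf := div_nonneg (hfnonneg θ1) hδf.le
    linarith
  push_neg at hcase
  -- main case : ε < f θ1
  have haL : a * L ≤ 1 := by
    have h1 : a < 1 / L := lt_of_lt_of_le ha (min_le_left _ _)
    rw [lt_div_iff₀ hL] at h1
    exact h1.le
  have hdpos : (0 : ℝ) < (d : ℝ) := by
    have : (1 : ℝ) ≤ (d : ℝ) := by exact_mod_cast hd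
    linarith
  have haσ : a * (L * σ ^ 2 * d) ≤ μ * ε := by
    have h1 : a < μ * ε / (L * σ ^ 2 * d) := lt_of_lt_of_le ha (min_le_right _ _)
    have h2 : (0 : ℝ) < L * σ ^ 2 * d := by positivity
    rw [lt_div_iff₀ h2] at h1
    exact h1.le
  have hdescent : ∀ x y : EuclideanSpace ℝ (Fin d),
      f y ≤ f x + ⟪gradient f x, y - x⟫ + L / 2 * ‖y - x‖ ^ 2 :=
    descent_lemma f hf L hL hsmooth
  -- μ ≤ L
  have hgradsq : ∀ x, ‖gradient f x‖ ^ 2 ≤ 2 * L * f x := by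
    intro x
    have h1 := hdescent x (x - L⁻¹ • gradient f x)
    have h2 : x - L⁻¹ • gradient f x - x = (-L⁻¹) • gradient f x := by
      rw [neg_smul]; abel
    rw [h2] at h1
    have h3 : ⟪gradient f x, (-L⁻¹) • gradient f x⟫ = -L⁻¹ * ‖gradient f x‖ ^ 2 := by
      rw [real_inner_smul_right, real_inner_self_eq_norm_sq]
    have h4 : ‖(-L⁻¹) • gradient f x‖ ^ 2 = L⁻¹ ^ 2 * ‖gradient f x‖ ^ 2 := by
      rw [norm_smul]
      simp [abs_of_pos (inv_pos.2 hL), mul_pow]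
    rw [h3, h4] at h1
    have h5 := hfnonneg (x - L⁻¹ • gradient f x)
    have hLinv : L * L⁻¹ = 1 := mul_inv_cancel₀ hL.ne'
    have he : L / 2 * (L⁻¹ ^ 2 * ‖gradient f x‖ ^ 2) = L⁻¹ * ‖gradient f x‖ ^ 2 / 2 := by
      field_simp
    rw [he] at h1
    have hG : L⁻¹ * ‖gradient f x‖ ^ 2 ≤ 2 * f x := by linarith
    have hfin : ‖gradient f x‖ ^ 2 = L * (L⁻¹ * ‖gradient f x‖ ^ 2) := by
      rw [← mul_assoc, hLinv, one_mul]
    rw [hfin]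
    calc L * (L⁻¹ * ‖gradient f x‖ ^ 2) ≤ L * (2 * f x) :=
        mul_le_mul_of_nonneg_left hG hL.le
      _ = 2 * L * f x := by ring
  have hμL : μ ≤ L := by
    have h1 := hPL θ1 hθ1
    have h2 := hgradsq θ1
    have h3 : 0 < f θ1 := lt_trans hε0 hcase
    nlinarith
  set c : ℝ := 1 - μ * a / 2 with hc
  have hμa : μ * a ≤ 1 := by
    calc μ * a ≤ L * a := mul_le_mul_of_nonneg_right hμL ha0.le
      _ = a * L := mul_comm _ _
      _ ≤ 1 := haL
  have hμann : 0 ≤ μ * a := by positivity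
  have hc0 : 0 ≤ c := by rw [hc]; linarith
  have hc1 : c ≤ 1 := by rw [hc]; linarith
  -- measurability of the iterates
  have hθmeas : ∀ k, 1 ≤ k → Measurable (θ k) := by
    intro k
    induction k with
    | zero => intro h; exact absurd h (by norm_num)
    | succ k ih =>
      intro _
      by_cases hk : 1 ≤ k
      · have he : θ (k + 1) = fun ω => θ k ω - a • g (θ k ω) (ξ k ω) :=
          funext (hθrec k hk)
        rw [he]
        exact (ih hk).sub ((hgmeas.comp ((ih hk).prodMk (hξmeas k))).const_smul a)
      · have hk0 : k = 0 := by omega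
        subst hk0
        have he : θ 1 = fun _ => θ1 := funext hθinit
        rw [he]; exact measurable_const
  have hfθmeas : ∀ k, 1 ≤ k → Measurable fun ω' => f (θ k ω') :=
    fun k hk => hf.continuous.measurable.comp (hθmeas k hk)
  -- the "stay in band" sets
  set A : ℕ → Set Ω' := fun n =>
    {ω' | ∀ m, 1 ≤ m → m ≤ n → ε < f (θ m ω') ∧ f (θ m ω') < δf} with hA
  have hAmeas : ∀ n, MeasurableSet (A n) := by
    intro n
    have he : A n = ⋂ m, {ω' | 1 ≤ m → m ≤ n → ε < f (θ m ω') ∧ f (θ m ω') < δf} := by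
      ext ω'; simp [hA, Set.mem_iInter]
    rw [he]
    refine MeasurableSet.iInter fun m => ?_
    by_cases hm : 1 ≤ m ∧ m ≤ n
    · have he2 : {ω' | 1 ≤ m → m ≤ n → ε < f (θ m ω') ∧ f (θ m ω') < δf}
          = {ω' | ε < f (θ m ω')} ∩ {ω' | f (θ m ω') < δf} := by
        ext ω'; simp [hm.1, hm.2]
      rw [he2]
      exact (measurableSet_lt measurable_const (hfθmeas m hm.1)).inter
        (measurableSet_lt (hfθmeas m hm.1) measurable_const)
    · have he2 : {ω' | 1 ≤ m → m ≤ n → ε < f (θ m ω') ∧ f (θ m ω') < δf} = Set.univ := by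
        ext ω'; simp only [Set.mem_setOf_eq, Set.mem_univ, iff_true]
        intro h1 h2; exact absurd ⟨h1, h2⟩ hm
      rw [he2]; exact MeasurableSet.univ
  have hAmono : ∀ k l : ℕ, k ≤ l → A l ⊆ A k := by
    intro k l hkl ω' hω' m h1 h2
    exact hω' m h1 (le_trans h2 hkl)
  have hA0 : A 0 = Set.univ := by
    ext ω'; simp only [hA, Set.mem_setOf_eq, Set.mem_univ, iff_true]
    intro m h1 h2; omega
  -- escape sets
  set D : ℕ → Set Ω' := fun k => A (k - 1) ∩ {ω' | δf ≤ f (θ k ω')} with hD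
  have hDmeas : ∀ k, 1 ≤ k → MeasurableSet (D k) :=
    fun k hk => (hAmeas (k - 1)).inter (measurableSet_le measurable_const (hfθmeas k hk))
  have hDsub : ∀ k, D k ⊆ A (k - 1) := fun k => Set.inter_subset_left
  -- the step inequality from step_main
  have hstep := fun (n : ℕ) (hn : 1 ≤ n) =>
    step_main f hf L hL hdescent hfnonneg δf μ hδf hμ hPL P g hgmeas σ hσ hgint
      hunbiased hvarint hvar P' ξ hξmeas hiid hlaw θ1 ε hε0 a ha0 haL haσ θ hθinit hθrec
      n hn (A n) rfl
  -- integrability of the main indicators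
  have hIk : ∀ k, 1 ≤ k →
      Integrable ((A (k - 1)).indicator fun ω' => f (θ k ω')) P' := by
    intro k hk
    rcases Nat.lt_or_ge k 2 with hk2 | hk2
    · have hk1 : k = 1 := by omega
      subst hk1
      have he : (A 0).indicator (fun ω' => f (θ 1 ω')) = fun _ => f θ1 := by
        funext ω'
        rw [hA0, Set.indicator_univ, hθinit ω']
      rw [he]
      exact integrable_const _
    · obtain ⟨n, rfl⟩ : ∃ n, k = n + 1 := ⟨k - 1, by omega⟩
      have hn : 1 ≤ n := by omega
      have := (hstep n hn).1
      simpa using this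
  have hIsub : ∀ k, 1 ≤ k → ∀ B : Set Ω', MeasurableSet B → B ⊆ A (k - 1) →
      Integrable (B.indicator fun ω' => f (θ k ω')) P' := by
    intro k hk B hBmeas hBsub
    refine (hIk k hk).mono' (((hfθmeas k hk).indicator hBmeas).aestronglyMeasurable)
      (Filter.Eventually.of_forall fun ω' => ?_)
    rw [Real.norm_eq_abs, abs_of_nonneg (Set.indicator_nonneg (fun x _ => hfnonneg _) ω')]
    exact Set.indicator_le_indicator_of_subset hBsub (fun x => hfnonneg _) ω'
  -- the scalar sequences
  set u : ℕ → ℝ := fun k => ∫ ω', (A (k - 1)).indicator (fun ω' => f (θ k ω')) ω' ∂P'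
    with hu
  set v : ℕ → ℝ := fun k => ∫ ω', (A k).indicator (fun ω' => f (θ k ω')) ω' ∂P' with hv
  set w : ℕ → ℝ := fun k => ∫ ω', (D k).indicator (fun ω' => f (θ k ω')) ω' ∂P' with hw
  have hu1 : u 1 = f θ1 := by
    have he : (A 0).indicator (fun ω' => f (θ 1 ω')) = fun _ => f θ1 := by
      funext ω'
      rw [hA0, Set.indicator_univ, hθinit ω']
    simp only [hu, Nat.sub_self]
    rw [he]
    simp
  have hunn : ∀ k, 0 ≤ u k :=
    fun k => integral_nonneg (Set.indicator_nonneg fun x _ => hfnonneg _)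
  have hvnn : ∀ k, 0 ≤ v k :=
    fun k => integral_nonneg (Set.indicator_nonneg fun x _ => hfnonneg _)
  have hwnn : ∀ k, 0 ≤ w k :=
    fun k => integral_nonneg (Set.indicator_nonneg fun x _ => hfnonneg _)
  have hIv : ∀ k, 1 ≤ k → Integrable ((A k).indicator fun ω' => f (θ k ω')) P' :=
    fun k hk => hIsub k hk (A k) (hAmeas k) (hAmono (k - 1) k (by omega))
  have hIw : ∀ k, 1 ≤ k → Integrable ((D k).indicator fun ω' => f (θ k ω')) P' :=
    fun k hk => hIsub k hk (D k) (hDmeas k hk) (hDsub k)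
  -- v k + w k ≤ u k
  have hvwu : ∀ k, 1 ≤ k → v k + w k ≤ u k := by
    intro k hk
    have hpt : ∀ ω', (A k).indicator (fun ω' => f (θ k ω')) ω'
        + (D k).indicator (fun ω' => f (θ k ω')) ω'
        ≤ (A (k - 1)).indicator (fun ω' => f (θ k ω')) ω' := by
      intro ω'
      by_cases hAk : ω' ∈ A k
      · have hD' : ω' ∉ D k := by
          intro hDk
          have h1 := (hAk k hk le_rfl).2
          have h2 := hDk.2
          simp only [Set.mem_setOf_eq] at h2
          linarith
        rw [Set.indicator_of_mem hAk, Set.indicator_of_notMem hD',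
          Set.indicator_of_mem (hAmono (k - 1) k (by omega) hAk), add_zero]
      · rw [Set.indicator_of_notMem hAk, zero_add]
        by_cases hDk : ω' ∈ D k
        · rw [Set.indicator_of_mem hDk, Set.indicator_of_mem (hDsub k hDk)]
        · rw [Set.indicator_of_notMem hDk]
          exact Set.indicator_nonneg (fun x _ => hfnonneg _) ω'
    have hint : Integrable (fun ω' => (A k).indicator (fun ω' => f (θ k ω')) ω'
        + (D k).indicator (fun ω' => f (θ k ω')) ω') P' := (hIv k hk).add (hIw k hk)
    have h1 : ∫ ω', ((A k).indicator (fun ω' => f (θ k ω')) ω'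
        + (D k).indicator (fun ω' => f (θ k ω')) ω') ∂P'
        ≤ ∫ ω', (A (k - 1)).indicator (fun ω' => f (θ k ω')) ω' ∂P' :=
      integral_mono hint (hIk k hk) hpt
    rw [integral_add (hIv k hk) (hIw k hk)] at h1
    exact h1
  -- u (k+1) ≤ c * v k
  have hucv : ∀ k, 1 ≤ k → u (k + 1) ≤ c * v k := by
    intro k hk
    have := (hstep k hk).2
    simp only [hu, hv, Nat.add_sub_cancel]
    exact this
  -- consequences
  have huc : ∀ k, 1 ≤ k → u (k + 1) ≤ c * u k := by
    intro k hk
    calc u (k + 1) ≤ c * v k := hucv k hk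
      _ ≤ c * u k := by
          have := hvwu k hk
          have := hwnn k
          nlinarith [hvnn k]
  have huw : ∀ k, 1 ≤ k → u (k + 1) + w k ≤ u k := by
    intro k hk
    have h1 : u (k + 1) ≤ v k := by
      calc u (k + 1) ≤ c * v k := hucv k hk
        _ ≤ 1 * v k := mul_le_mul_of_nonneg_right hc1 (hvnn k)
        _ = v k := one_mul _
    have := hvwu k hk
    linarith
  -- geometric decay
  have hgeo : ∀ j : ℕ, u (j + 1) ≤ c ^ j * f θ1 := by
    intro j
    induction j with
    | zero => simpa using hu1.le
    | succ j ih =>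
      calc u (j + 1 + 1) ≤ c * u (j + 1) := huc (j + 1) (by omega)
        _ ≤ c * (c ^ j * f θ1) := mul_le_mul_of_nonneg_left ih hc0
        _ = c ^ (j + 1) * f θ1 := by ring
  -- sum of escapes
  have hsum : ∀ M : ℕ, (∑ k ∈ Finset.Icc 1 M, w k) ≤ u 1 - u (M + 1) := by
    intro M
    induction M with
    | zero => simp
    | succ M ih =>
      rw [Finset.sum_Icc_succ_top (by omega : 1 ≤ M + 1)]
      have := huw (M + 1) (by omega)
      linarith
  -- the main events
  set E1 : Set Ω' := A (N - 1) ∩ {ω' | ε < f (θ N ω')} with hE1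
  have hE1meas : MeasurableSet E1 :=
    (hAmeas (N - 1)).inter (measurableSet_lt measurable_const (hfθmeas N hN))
  have hE1sub : E1 ⊆ A (N - 1) := Set.inter_subset_left
  -- Markov for E1
  have hPE1 : ε * (P' E1).toReal ≤ u N := by
    have hpt : ∀ ω', E1.indicator (fun _ => ε) ω'
        ≤ (A (N - 1)).indicator (fun ω' => f (θ N ω')) ω' := by
      intro ω'
      by_cases hmem : ω' ∈ E1
      · rw [Set.indicator_of_mem hmem, Set.indicator_of_mem (hE1sub hmem)]
        exact (hmem.2).le
      · rw [Set.indicator_of_notMem hmem]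
        exact Set.indicator_nonneg (fun x _ => hfnonneg _) ω'
    have h1 : ∫ ω', E1.indicator (fun _ => ε) ω' ∂P' ≤ u N :=
      integral_mono ((integrable_const ε).indicator hE1meas) (hIk N hN) hpt
    rw [integral_indicator_const _ hE1meas] at h1
    have h2 : ε * P'.real E1 ≤ u N := by simpa [mul_comm] using h1
    exact h2
  -- Markov for D k
  have hPD : ∀ k, 1 ≤ k → δf * (P' (D k)).toReal ≤ w k := by
    intro k hk
    have hpt : ∀ ω', (D k).indicator (fun _ => δf) ω'
        ≤ (D k).indicator (fun ω' => f (θ k ω')) ω' := by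
      intro ω'
      by_cases hmem : ω' ∈ D k
      · rw [Set.indicator_of_mem hmem, Set.indicator_of_mem hmem]
        exact hmem.2
      · rw [Set.indicator_of_notMem hmem, Set.indicator_of_notMem hmem]
    have h1 : ∫ ω', (D k).indicator (fun _ => δf) ω' ∂P' ≤ w k :=
      integral_mono ((integrable_const δf).indicator (hDmeas k hk)) (hIw k hk) hpt
    rw [integral_indicator_const _ (hDmeas k hk)] at h1
    have h2 : δf * P'.real (D k) ≤ w k := by simpa [mul_comm] using h1
    exact h2
  -- covering the failure event
  have hcover : {ω' | (N : ℕ∞) < τ ω'} ⊆ E1 ∪ ⋃ k ∈ Finset.Icc 1 (N - 1), D k := by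
    intro ω' hω'
    simp only [Set.mem_setOf_eq] at hω'
    have hband : ∀ m, 1 ≤ m → m ≤ N → ε < f (θ m ω') := by
      intro m h1 h2
      by_contra hcon
      push_neg at hcon
      have hmem : ((m : ℕ) : ℕ∞) ∈ {k : ℕ∞ | ∃ m' : ℕ, k = m' ∧ 1 ≤ m' ∧ f (θ m' ω') ≤ ε} :=
        ⟨m, rfl, h1, hcon⟩
      have hle : τ ω' ≤ ((m : ℕ) : ℕ∞) := by rw [hτ ω']; exact sInf_le hmem
      have hle2 : ((m : ℕ) : ℕ∞) ≤ (N : ℕ∞) := by exact_mod_cast h2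
      exact absurd (lt_of_lt_of_le hω' (le_trans hle hle2)) (lt_irrefl _)
    by_cases hstay : ∀ k, 1 ≤ k → k ≤ N - 1 → f (θ k ω') < δf
    · left
      refine ⟨fun m h1 h2 => ⟨hband m h1 (by omega), hstay m h1 h2⟩, ?_⟩
      exact hband N hN le_rfl
    · right
      push_neg at hstay
      obtain ⟨k₀, hk1, hk2, hk3⟩ := hstay
      have hex : ∃ k, (1 ≤ k ∧ k ≤ N - 1) ∧ δf ≤ f (θ k ω') := ⟨k₀, ⟨hk1, hk2⟩, hk3⟩
      set k1 := Nat.find hex with hk1def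
      obtain ⟨⟨hk11, hk12⟩, hk13⟩ := Nat.find_spec hex
      have hmemD : ω' ∈ D k1 := by
        refine ⟨?_, hk13⟩
        intro m h1 h2
        refine ⟨hband m h1 (by omega), ?_⟩
        have hh := Nat.find_min hex (show m < k1 by omega)
        push_neg at hh
        exact hh ⟨h1, by omega⟩
      simp only [Set.mem_iUnion]
      exact ⟨k1, Finset.mem_Icc.2 ⟨hk11, hk12⟩, hmemD⟩
  -- measure bound
  have hmeasbound : P' {ω' | (N : ℕ∞) < τ ω'}
      ≤ P' E1 + ∑ k ∈ Finset.Icc 1 (N - 1), P' (D k) := by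
    calc P' {ω' | (N : ℕ∞) < τ ω'}
        ≤ P' (E1 ∪ ⋃ k ∈ Finset.Icc 1 (N - 1), D k) := measure_mono hcover
      _ ≤ P' E1 + P' (⋃ k ∈ Finset.Icc 1 (N - 1), D k) := measure_union_le _ _
      _ ≤ P' E1 + ∑ k ∈ Finset.Icc 1 (N - 1), P' (D k) := by
          gcongr
          exact measure_biUnion_finset_le _ _
  have hsumne : (∑ k ∈ Finset.Icc 1 (N - 1), P' (D k)) ≠ ⊤ := by
    refine ne_of_lt ?_
    calc (∑ k ∈ Finset.Icc 1 (N - 1), P' (D k))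
        ≤ ∑ _k ∈ Finset.Icc 1 (N - 1), 1 :=
          Finset.sum_le_sum fun k _ => prob_le_one
      _ = (N - 1 : ℕ) := by simp [mul_comm]
      _ < ⊤ := by exact_mod_cast ENNReal.natCast_lt_top _
  have htoReal : pfail ≤ (P' E1).toReal
      + ∑ k ∈ Finset.Icc 1 (N - 1), (P' (D k)).toReal := by
    rw [hpfail]
    have h1 : (P' E1 + ∑ k ∈ Finset.Icc 1 (N - 1), P' (D k)) ≠ ⊤ :=
      ENNReal.add_ne_top.2 ⟨measure_ne_top _ _, hsumne⟩
    calc (P' {ω' | (N : ℕ∞) < τ ω'}).toReal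
        ≤ (P' E1 + ∑ k ∈ Finset.Icc 1 (N - 1), P' (D k)).toReal :=
          ENNReal.toReal_mono h1 hmeasbound
      _ = (P' E1).toReal + (∑ k ∈ Finset.Icc 1 (N - 1), P' (D k)).toReal := by
          rw [ENNReal.toReal_add (measure_ne_top _ _) hsumne]
      _ = (P' E1).toReal + ∑ k ∈ Finset.Icc 1 (N - 1), (P' (D k)).toReal := by
          rw [ENNReal.toReal_sum fun k _ => measure_ne_top _ _]
  have hE1b : (P' E1).toReal ≤ u N / ε := by
    rw [le_div_iff₀ hε0]
    calc (P' E1).toReal * ε = ε * (P' E1).toReal := mul_comm _ _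
      _ ≤ u N := hPE1
  have hsumD : ∑ k ∈ Finset.Icc 1 (N - 1), (P' (D k)).toReal
      ≤ (∑ k ∈ Finset.Icc 1 (N - 1), w k) / δf := by
    rw [Finset.sum_div]
    refine Finset.sum_le_sum fun k hk => ?_
    have hk1 : 1 ≤ k := (Finset.mem_Icc.1 hk).1
    rw [le_div_iff₀ hδf]
    calc (P' (D k)).toReal * δf = δf * (P' (D k)).toReal := mul_comm _ _
      _ ≤ w k := hPD k hk1
  have hwsum : (∑ k ∈ Finset.Icc 1 (N - 1), w k) ≤ f θ1 := by
    have h1 := hsum (N - 1)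
    have h2 := hunn (N - 1 + 1)
    linarith [hu1.le, hu1.ge]
  have huN : u N ≤ c ^ (N - 1) * f θ1 := by
    have h1 := hgeo (N - 1)
    have hNe : N - 1 + 1 = N := by omega
    rwa [hNe] at h1
  have hfinal : pfail ≤ c ^ (N - 1) * (f θ1 / ε) + f θ1 / δf := by
    calc pfail ≤ (P' E1).toReal + ∑ k ∈ Finset.Icc 1 (N - 1), (P' (D k)).toReal :=
        htoReal
      _ ≤ u N / ε + (∑ k ∈ Finset.Icc 1 (N - 1), w k) / δf := add_le_add hE1b hsumD
      _ ≤ (c ^ (N - 1) * f θ1) / ε + f θ1 / δf :=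
          add_le_add ((div_le_div_iff_of_pos_right hε0).2 huN) ((div_le_div_iff_of_pos_right hδf).2 hwsum)
      _ = c ^ (N - 1) * (f θ1 / ε) + f θ1 / δf := by ring
  have hpf0 : 0 ≤ pfail := hpfail ▸ ENNReal.toReal_nonneg
  have hpf1 : pfail ≤ 1 := by
    rw [hpfail]
    calc (P' {ω' | (N : ℕ∞) < τ ω'}).toReal
        ≤ (P' Set.univ).toReal :=
          ENNReal.toReal_mono (measure_ne_top _ _) (measure_mono (Set.subset_univ _))
      _ = 1 := by simp
  have hcc : c ≤ 1 - μ * a * pfail / 2 := by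
    rw [hc]
    have h1 : μ * a * pfail ≤ μ * a := by
      calc μ * a * pfail ≤ μ * a * 1 := mul_le_mul_of_nonneg_left hpf1 hμann
        _ = μ * a := mul_one _
    linarith
  have hpow : c ^ (N - 1) ≤ (1 - μ * a * pfail / 2) ^ (N - 1) :=
    pow_le_pow_left₀ hc0 hcc _
  have h1 : 0 ≤ f θ1 / ε := div_nonneg (hfnonneg θ1) hε0.le
  calc pfail ≤ c ^ (N - 1) * (f θ1 / ε) + f θ1 / δf := hfinal
    _ ≤ (1 - μ * a * pfail / 2) ^ (N - 1) * (f θ1 / ε) + f θ1 / δf := by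
        have h2 := mul_le_mul_of_nonneg_right hpow h1
        linarith
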